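/- For every compactly supported continuous function φ : ℝ → ℝ, the pairing of the measure χ♭(R,·) with φ, namely G(R) := (1/2)·e^{R/2}·(φ(R) + φ(−R)) + ∫_{|u|<|R|} g(R,u)·φ(u) du, tends to 0 as R → −∞. -/

import Mathlib

open MeasureTheory Filter

/-- The power series `f(y) = ∑ (−1)^n yⁿ / (16ⁿ (n!)²)`. -/
noncomputable def f (y : ℝ) : ℝ :=
  ∑' n : ℕ, (-1 : ℝ) ^ n * y ^ n / (16 ^ n * (Nat.factorial n : ℝ) ^ 2)

/-- The absolutely continuous part of the isothermal kernel `χ♭`: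
`g(R,u) = −(1/2)·sgn(R)·e^{R/2}·((1/2)·f(u² − R²) + 2R·f′(u² − R²))` for `|u| < |R|`,
and `0` otherwise. -/
noncomputable def g (R u : ℝ) : ℝ :=
  if |u| < |R| then
    -(1 / 2) * Real.sign R * Real.exp (R / 2) *
      ((1 / 2) * f (u ^ 2 - R ^ 2) + 2 * R * deriv f (u ^ 2 - R ^ 2))
  else 0


lemma aux_stirling (n : ℕ) (hn : 1 ≤ n) :
    Real.sqrt (2*n) * ((n:ℝ)/Real.exp 1)^n ≤ n.factorial := by
  have h1 : Real.sqrt Real.pi ≤ Stirling.stirlingSeq n := by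
    obtain ⟨k, rfl⟩ := Nat.exists_eq_add_of_le hn
    have := Stirling.stirlingSeq'_antitone.le_of_tendsto
      (Stirling.tendsto_stirlingSeq_sqrt_pi.comp (tendsto_add_atTop_nat 1)) k
    simpa [Function.comp, Nat.succ_eq_add_one, add_comm 1 k] using this
  have h2 : (1:ℝ) ≤ Real.sqrt Real.pi := by
    rw [show (1:ℝ) = Real.sqrt 1 by simp]
    exact Real.sqrt_le_sqrt (by linarith [Real.pi_gt_three])
  have hpos : 0 < Real.sqrt (2*n) * ((n:ℝ)/Real.exp 1)^n := by
    have : (0:ℝ) < n := by exact_mod_cast hn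
    positivity
  have := le_trans h2 h1
  rw [Stirling.stirlingSeq, le_div_iff₀ hpos] at this
  linarith

lemma aux_exppow (x : ℝ) (hx : 0 ≤ x) (n : ℕ) (hn : 1 ≤ n) :
    (Real.exp 1 * x / n)^n ≤ Real.exp x := by
  have hn' : (0:ℝ) < n := by exact_mod_cast hn
  have h1 : x / n ≤ Real.exp (x/n - 1) := by
    have := Real.add_one_le_exp (x/n - 1)
    linarith
  have h2 : (x/n)^n ≤ Real.exp (x/n - 1) ^ n :=
    pow_le_pow_left₀ (by positivity) h1 n
  have h3 : Real.exp (x/n - 1) ^ n = Real.exp ((x/n - 1) * n) := by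
    rw [← Real.exp_nat_mul]; ring_nf
  have h4 : (x/n - 1) * n = x - n := by field_simp
  calc (Real.exp 1 * x / n)^n = Real.exp 1 ^ n * (x/n)^n := by
        rw [← mul_pow]; ring_nf
    _ ≤ Real.exp 1 ^ n * Real.exp (x - n) := by
        rw [h3, h4] at h2
        exact mul_le_mul_of_nonneg_left h2 (by positivity)
    _ = Real.exp x := by
        rw [← Real.exp_nat_mul]
        rw [← Real.exp_add]; ring_nf

lemma aux_mono (x : ℝ) (hx : 1 ≤ x) (n : ℕ) :
    x^n/(n.factorial : ℝ) ≤ x^(⌊x⌋₊)/((⌊x⌋₊).factorial : ℝ) := by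
  set m := ⌊x⌋₊ with hm
  have hx0 : (0:ℝ) < x := by linarith
  have hmx : (m:ℝ) ≤ x := Nat.floor_le (by linarith)
  have hxm : x < (m:ℝ) + 1 := Nat.lt_floor_add_one x
  have B : ∀ k, x^(m+k)/((m+k).factorial : ℝ) ≤ x^m/(m.factorial : ℝ) := by
    intro k
    induction k with
    | zero => simp
    | succ k ih =>
      refine le_trans ?_ ih
      have h1 : (m+(k+1)).factorial = (m+k+1) * (m+k).factorial := by
        rw [show m+(k+1) = (m+k)+1 by ring, Nat.factorial_succ]
      have h2 : x^(m+(k+1)) = x^(m+k) * x := by rw [show m+(k+1) = (m+k)+1 by ring, pow_succ]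
      rw [h1, h2]
      have hfpos : (0:ℝ) < ((m+k).factorial : ℝ) := by positivity
      rw [Nat.cast_mul, div_le_div_iff₀ (by positivity) hfpos]
      have hxle : x ≤ ((m+k+1 : ℕ) : ℝ) := by
        have : ((m:ℝ)) ≤ ((m+k:ℕ):ℝ) := by exact_mod_cast Nat.le_add_right m k
        push_cast at this ⊢; linarith
      have h3 : x^(m+k) * x ≤ x^(m+k) * ((m+k+1:ℕ):ℝ) :=
        mul_le_mul_of_nonneg_left hxle (by positivity)
      calc x^(m+k) * x * ((m+k).factorial:ℝ) ≤ x^(m+k) * ((m+k+1:ℕ):ℝ) * ((m+k).factorial:ℝ) := by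
            exact mul_le_mul_of_nonneg_right h3 (le_of_lt hfpos)
        _ = x^(m+k) * (((m+k+1:ℕ):ℝ) * ((m+k).factorial:ℝ)) := by ring
  have A : ∀ k, x^(m-k)/((m-k).factorial : ℝ) ≤ x^m/(m.factorial : ℝ) := by
    intro k
    induction k with
    | zero => simp
    | succ k ih =>
      rcases le_or_gt m k with h | h
      · rw [Nat.sub_eq_zero_of_le (le_trans h (Nat.le_succ k))]
        rw [Nat.sub_eq_zero_of_le h] at ih
        exact ih
      · -- k < m, so m - (k+1) = (m-k) - 1 and m - k ≥ 1
        refine le_trans ?_ ih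
        have hmk : 1 ≤ m - k := by omega
        have e1 : m - (k+1) = (m-k) - 1 := by omega
        have e2 : m - k = (m - (k+1)) + 1 := by omega
        rw [e2, Nat.factorial_succ, pow_succ]
        set j := m - (k+1)
        have hfpos : (0:ℝ) < (j.factorial : ℝ) := by positivity
        rw [Nat.cast_mul, div_le_div_iff₀ hfpos (by positivity)]
        have hj1x : ((j+1:ℕ):ℝ) ≤ x := by
          have : j + 1 ≤ m := by omega
          have := (Nat.cast_le (α := ℝ)).mpr this
          push_cast at this ⊢; linarith
        calc x^j * (((j+1:ℕ):ℝ) * (j.factorial:ℝ)) = x^j * ((j+1:ℕ):ℝ) * (j.factorial:ℝ) := by ring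
          _ ≤ x^j * x * (j.factorial:ℝ) := by
              refine mul_le_mul_of_nonneg_right ?_ (le_of_lt hfpos)
              exact mul_le_mul_of_nonneg_left hj1x (by positivity)
  rcases le_or_gt n m with h | h
  · have := A (m - n)
    rwa [Nat.sub_sub_self h] at this
  · have := B (n - m)
    rwa [Nat.add_sub_cancel' (le_of_lt h)] at this

lemma aux_sup (x : ℝ) (hx : 1 ≤ x) (n : ℕ) :
    x^n/(n.factorial : ℝ) ≤ Real.exp x / Real.sqrt x := by
  have hx0 : (0:ℝ) < x := by linarith
  set m := ⌊x⌋₊ with hm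
  have hm1 : 1 ≤ m := Nat.le_floor (by exact_mod_cast hx)
  have hm0 : (0:ℝ) < m := by exact_mod_cast hm1
  have hmx : (m:ℝ) ≤ x := Nat.floor_le (by linarith)
  have hx2m : x ≤ 2*m := by
    rcases le_total x 2 with h | h
    · have : (1:ℝ) ≤ (m:ℝ) := by exact_mod_cast hm1
      linarith
    · have := Nat.sub_one_lt_floor x
      rw [← hm] at this
      linarith
  have hstir := aux_stirling m hm1
  have hden : (0:ℝ) < Real.sqrt (2*m) * ((m:ℝ)/Real.exp 1)^m := by positivity
  have step1 : x^m/(m.factorial : ℝ) ≤ x^m / (Real.sqrt (2*m) * ((m:ℝ)/Real.exp 1)^m) := by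
    apply div_le_div_of_nonneg_left (by positivity) hden hstir
  have step2 : x^m / (Real.sqrt (2*m) * ((m:ℝ)/Real.exp 1)^m)
      = (Real.exp 1 * x / m)^m / Real.sqrt (2*m) := by
    rw [div_pow, div_pow, mul_pow]
    field_simp
  have step3 : (Real.exp 1 * x / m)^m / Real.sqrt (2*m) ≤ Real.exp x / Real.sqrt x := by
    apply div_le_div₀ (by positivity) (aux_exppow x (by linarith) m hm1)
      (by positivity) (Real.sqrt_le_sqrt hx2m)
  calc x^n/(n.factorial : ℝ) ≤ x^m/(m.factorial : ℝ) := aux_mono x hx n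
    _ ≤ _ := by rw [step2] at step1; exact le_trans step1 step3

lemma aux_exp_tsum (x : ℝ) : ∑' n : ℕ, x ^ n / (n.factorial : ℝ) = Real.exp x := by
  rw [Real.exp_eq_exp_ℝ, NormedSpace.exp_eq_tsum_div]

lemma summable_sq (x : ℝ) : Summable (fun n : ℕ => (x^2)^n / ((n.factorial : ℝ))^2) := by
  apply Summable.of_nonneg_of_le (fun n => by positivity) (fun n => ?_)
    (Real.summable_pow_div_factorial (x^2))
  apply div_le_div_of_nonneg_left (by positivity) (by positivity)
  have h1 : (1:ℝ) ≤ (n.factorial : ℝ) := by exact_mod_cast Nat.one_le_iff_ne_zero.mpr (Nat.factorial_ne_zero n)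
  nlinarith

lemma aux_S (x : ℝ) (hx : 1 ≤ x) :
    ∑' n : ℕ, (x^2)^n / ((n.factorial : ℝ))^2 ≤ Real.exp x * Real.exp x / Real.sqrt x := by
  have hx0 : (0:ℝ) < x := by linarith
  have h1 : ∀ n : ℕ, (x^2)^n / ((n.factorial : ℝ))^2
      ≤ (Real.exp x / Real.sqrt x) * (x^n / (n.factorial : ℝ)) := by
    intro n
    have e : (x^2)^n / ((n.factorial : ℝ))^2 = (x^n/(n.factorial : ℝ)) * (x^n/(n.factorial : ℝ)) := by
      rw [← pow_mul, mul_comm 2 n, pow_mul]; ring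
    rw [e]
    exact mul_le_mul_of_nonneg_right (aux_sup x hx n) (by positivity)
  calc ∑' n : ℕ, (x^2)^n / ((n.factorial : ℝ))^2
      ≤ ∑' n : ℕ, (Real.exp x / Real.sqrt x) * (x^n / (n.factorial : ℝ)) :=
        Summable.tsum_le_tsum h1 (summable_sq x) ((Real.summable_pow_div_factorial x).mul_left _)
    _ = (Real.exp x / Real.sqrt x) * Real.exp x := by
        rw [tsum_mul_left, aux_exp_tsum]
    _ = Real.exp x * Real.exp x / Real.sqrt x := by ring

lemma summable_shift (x : ℝ) : Summable (fun n : ℕ => x^(n+1) / ((n+1).factorial : ℝ)) :=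
  (summable_nat_add_iff 1).mpr (Real.summable_pow_div_factorial x)

lemma shift_tsum_le (x : ℝ) : ∑' n : ℕ, x^(n+1) / ((n+1).factorial : ℝ) ≤ Real.exp x := by
  have h := Summable.tsum_eq_zero_add (Real.summable_pow_div_factorial x)
  rw [aux_exp_tsum] at h
  simp only [pow_zero, Nat.factorial_zero, Nat.cast_one, div_one] at h
  linarith

lemma summable_T (x : ℝ) : Summable (fun n : ℕ =>
    (x^2)^n / ((n.factorial : ℝ) * ((n+1).factorial : ℝ))) := by
  apply Summable.of_nonneg_of_le (fun n => by positivity) (fun n => ?_)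
    (Real.summable_pow_div_factorial (x^2))
  apply div_le_div_of_nonneg_left (by positivity) (by positivity)
  have h1 : (1:ℝ) ≤ ((n+1).factorial : ℝ) := by
    exact_mod_cast Nat.one_le_iff_ne_zero.mpr (Nat.factorial_ne_zero (n+1))
  have h0 : (0:ℝ) < (n.factorial : ℝ) := by positivity
  nlinarith

lemma aux_T (x : ℝ) (hx : 1 ≤ x) :
    ∑' n : ℕ, (x^2)^n / ((n.factorial : ℝ) * ((n+1).factorial : ℝ))
      ≤ Real.exp x * Real.exp x / (x * Real.sqrt x) := by
  have hx0 : (0:ℝ) < x := by linarith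
  have h1 : ∀ n : ℕ, (x^2)^n / ((n.factorial : ℝ) * ((n+1).factorial : ℝ))
      ≤ (Real.exp x / (x * Real.sqrt x)) * (x^(n+1) / ((n+1).factorial : ℝ)) := by
    intro n
    have e : (x^2)^n / ((n.factorial : ℝ) * ((n+1).factorial : ℝ))
        = (x^n/(n.factorial : ℝ)) * (x^(n+1)/((n+1).factorial : ℝ)) / x := by
      rw [← pow_mul, mul_comm 2 n, pow_mul]
      field_simp
      ring
    rw [e]
    rw [div_le_iff₀ hx0] at *
    have := aux_sup x hx n
    have hp : (0:ℝ) ≤ x^(n+1)/((n+1).factorial : ℝ) := by positivity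
    calc (x^n/(n.factorial : ℝ)) * (x^(n+1)/((n+1).factorial : ℝ))
        ≤ (Real.exp x / Real.sqrt x) * (x^(n+1)/((n+1).factorial : ℝ)) :=
          mul_le_mul_of_nonneg_right this hp
      _ = Real.exp x / (x * Real.sqrt x) * (x ^ (n + 1) / ((n+1).factorial : ℝ)) * x := by
          field_simp
  calc ∑' n : ℕ, (x^2)^n / ((n.factorial : ℝ) * ((n+1).factorial : ℝ))
      ≤ ∑' n : ℕ, (Real.exp x / (x * Real.sqrt x)) * (x^(n+1) / ((n+1).factorial : ℝ)) :=
        Summable.tsum_le_tsum h1 (summable_T x) ((summable_shift x).mul_left _)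
    _ = (Real.exp x / (x * Real.sqrt x)) * ∑' n : ℕ, x^(n+1) / ((n+1).factorial : ℝ) :=
        tsum_mul_left
    _ ≤ (Real.exp x / (x * Real.sqrt x)) * Real.exp x :=
        mul_le_mul_of_nonneg_left (shift_tsum_le x) (by positivity)
    _ = Real.exp x * Real.exp x / (x * Real.sqrt x) := by ring

noncomputable def c (n : ℕ) : ℝ := (-1) ^ n / (16 ^ n * (n.factorial : ℝ) ^ 2)

lemma c_abs (n : ℕ) : |c n| = 1 / (16 ^ n * (n.factorial : ℝ) ^ 2) := by
  rw [c, abs_div, abs_pow, abs_neg, abs_one, one_pow]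
  congr 1
  rw [abs_of_pos]; positivity

lemma f_eq (y : ℝ) : f y = ∑' n : ℕ, c n * y ^ n := by
  rw [f]
  exact tsum_congr fun n => by rw [c]; ring

/-- comparison bound used repeatedly -/
lemma aux_cmp (r : ℝ) (hr : 1 ≤ r) :
    Summable (fun n : ℕ => (n : ℝ) * r ^ (n - 1) / (16 ^ n * (n.factorial : ℝ) ^ 2)) := by
  apply Summable.of_nonneg_of_le (fun n => by positivity) (fun n => ?_)
    (Real.summable_pow_div_factorial (r / 8))
  have h2 : (n : ℝ) ≤ 2 ^ n := by exact_mod_cast Nat.le_of_lt (Nat.lt_two_pow_self (n := n))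
  have h3 : r ^ (n - 1) ≤ r ^ n := pow_le_pow_right₀ hr (Nat.sub_le n 1)
  have h4 : (1:ℝ) ≤ (n.factorial : ℝ) := by
    exact_mod_cast Nat.one_le_iff_ne_zero.mpr (Nat.factorial_ne_zero n)
  have h5 : (n.factorial : ℝ) ≤ (n.factorial : ℝ)^2 := by nlinarith
  have key : (n : ℝ) * r ^ (n - 1) * (n.factorial : ℝ) ≤ 2 ^ n * r ^ n * (n.factorial : ℝ)^2 := by
    have h6 := mul_le_mul h2 h3 (by positivity) (by positivity : (0:ℝ) ≤ 2 ^ n)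
    calc (n : ℝ) * r ^ (n - 1) * (n.factorial : ℝ) ≤ 2 ^ n * r ^ n * (n.factorial : ℝ) :=
          mul_le_mul_of_nonneg_right h6 (by positivity)
      _ ≤ 2 ^ n * r ^ n * (n.factorial : ℝ)^2 :=
          mul_le_mul_of_nonneg_left h5 (by positivity)
  rw [div_pow, div_div]
  rw [div_le_div_iff₀ (by positivity) (by positivity)]
  calc (n : ℝ) * r ^ (n-1) * (8 ^ n * (n.factorial : ℝ))
      = ((n : ℝ) * r ^ (n-1) * (n.factorial : ℝ)) * 8 ^ n := by ring
    _ ≤ (2 ^ n * r ^ n * (n.factorial : ℝ)^2) * 8 ^ n :=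
        mul_le_mul_of_nonneg_right key (by positivity)
    _ = r ^ n * (16 ^ n * (n.factorial : ℝ)^2) := by
        rw [show (16:ℝ)^n = 2^n * 8^n by rw [← mul_pow]; norm_num]
        ring

lemma summable_cf (y : ℝ) : Summable (fun n : ℕ => c n * y ^ n) := by
  apply Summable.of_norm
  apply Summable.of_nonneg_of_le (fun n => by positivity) (fun n => ?_)
    (Real.summable_pow_div_factorial (|y| / 16))
  rw [Real.norm_eq_abs, abs_mul, c_abs, abs_pow]
  rw [div_pow, div_div]
  have h4 : (1:ℝ) ≤ (n.factorial : ℝ) := by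
    exact_mod_cast Nat.one_le_iff_ne_zero.mpr (Nat.factorial_ne_zero n)
  rw [one_div_mul_eq_div, div_le_div_iff₀ (by positivity) (by positivity)]
  calc |y| ^ n * (16 ^ n * (n.factorial : ℝ)) ≤ |y| ^ n * (16 ^ n * (n.factorial : ℝ)^2) := by
        have : (n.factorial : ℝ) ≤ (n.factorial : ℝ)^2 := by nlinarith
        have := mul_le_mul_of_nonneg_left this (by positivity : (0:ℝ) ≤ (16:ℝ)^n)
        exact mul_le_mul_of_nonneg_left this (by positivity)
    _ = |y| ^ n * (16 ^ n * (n.factorial : ℝ) ^ 2) := by ring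

noncomputable def fd (y : ℝ) : ℝ := ∑' n : ℕ, c n * ((n : ℝ) * y ^ (n - 1))

lemma f_hasDerivAt (y : ℝ) : HasDerivAt f (fd y) y := by
  have h : f = fun z => ∑' n : ℕ, c n * z ^ n := funext f_eq
  rw [h, fd]
  set r := |y| + 1 with hr
  have hr1 : (1:ℝ) ≤ r := by rw [hr]; linarith [abs_nonneg y]
  refine hasDerivAt_tsum_of_isPreconnected
    (u := fun n : ℕ => (n : ℝ) * r ^ (n - 1) / (16 ^ n * (n.factorial : ℝ) ^ 2))
    (g := fun (n : ℕ) (z : ℝ) => c n * z ^ n)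
    (g' := fun (n : ℕ) (z : ℝ) => c n * ((n : ℝ) * z ^ (n - 1)))
    (aux_cmp r hr1) (Metric.isOpen_ball (x := (0:ℝ)) (ε := r)) ((convex_ball (0:ℝ) r).isPreconnected)
    (fun n z _ => (hasDerivAt_pow n z).const_mul (c n))
    (fun n z hz => ?_) (Metric.mem_ball_self (by linarith : (0:ℝ) < r)) (summable_cf 0)
    (Metric.mem_ball.mpr (by rw [Real.dist_eq, sub_zero]; simp only [hr]; linarith))
  · rw [Real.norm_eq_abs, abs_mul, c_abs, abs_mul]
    rw [Metric.mem_ball, Real.dist_eq, sub_zero] at hz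
    have hzr : |z| ≤ r := le_of_lt hz
    have h1 : |z ^ (n-1)| ≤ r ^ (n-1) := by
      rw [abs_pow]
      exact pow_le_pow_left₀ (abs_nonneg z) hzr _
    have h2 : |(n:ℝ)| = (n:ℝ) := abs_of_nonneg (Nat.cast_nonneg n)
    rw [h2]
    calc 1 / (16 ^ n * (n.factorial : ℝ) ^ 2) * ((n:ℝ) * |z ^ (n-1)|)
        ≤ 1 / (16 ^ n * (n.factorial : ℝ) ^ 2) * ((n:ℝ) * r ^ (n-1)) := by
          apply mul_le_mul_of_nonneg_left _ (by positivity)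
          exact mul_le_mul_of_nonneg_left h1 (Nat.cast_nonneg n)
      _ = (n : ℝ) * r ^ (n - 1) / (16 ^ n * (n.factorial : ℝ) ^ 2) := by ring

lemma deriv_f_eq (y : ℝ) : deriv f y = fd y := (f_hasDerivAt y).deriv

lemma f_cont : Continuous f :=
  continuous_iff_continuousAt.mpr fun y => (f_hasDerivAt y).continuousAt

lemma summable_pow_div_sq (a : ℝ) (ha : 0 ≤ a) :
    Summable (fun n : ℕ => a^n / ((n.factorial : ℝ))^2) := by
  apply Summable.of_nonneg_of_le (fun n => by positivity) (fun n => ?_)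
    (Real.summable_pow_div_factorial a)
  apply div_le_div_of_nonneg_left (by positivity) (by positivity)
  have h1 : (1:ℝ) ≤ (n.factorial : ℝ) := by
    exact_mod_cast Nat.one_le_iff_ne_zero.mpr (Nat.factorial_ne_zero n)
  nlinarith

lemma f_neg_bound (t : ℝ) (ht : 0 ≤ t) :
    |f (-t)| ≤ ∑' n : ℕ, (t/16)^n / ((n.factorial : ℝ))^2 := by
  rw [f_eq]
  have hterm : ∀ n : ℕ, ‖c n * (-t) ^ n‖ = (t/16)^n / ((n.factorial : ℝ))^2 := by
    intro n
    rw [Real.norm_eq_abs, abs_mul, c_abs, abs_pow, abs_neg, abs_of_nonneg ht, div_pow]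
    have h16 : (0:ℝ) < 16 ^ n := by positivity
    have hf : (0:ℝ) < (n.factorial : ℝ)^2 := by positivity
    field_simp
  have hsum : Summable (fun n : ℕ => ‖c n * (-t) ^ n‖) := by
    rw [show (fun n : ℕ => ‖c n * (-t) ^ n‖) = fun n : ℕ => (t/16)^n / ((n.factorial : ℝ))^2
      from funext hterm]
    exact summable_pow_div_sq (t/16) (by linarith)
  calc |(∑' n : ℕ, c n * (-t) ^ n)| ≤ ∑' n : ℕ, ‖c n * (-t) ^ n‖ :=
        norm_tsum_le_tsum_norm hsum
    _ = _ := tsum_congr hterm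

lemma fd_neg_bound (t : ℝ) (ht : 1 ≤ t) :
    |fd (-t)| ≤ (1/16) * ∑' m : ℕ, (t/16)^m / ((m.factorial : ℝ) * (((m+1).factorial : ℕ) : ℝ)) := by
  have ht0 : (0:ℝ) ≤ t := by linarith
  have hterm : ∀ n : ℕ, ‖c n * ((n:ℝ) * (-t) ^ (n-1))‖
      = (n:ℝ) * t ^ (n-1) / (16 ^ n * (n.factorial : ℝ)^2) := by
    intro n
    rw [Real.norm_eq_abs, abs_mul, c_abs, abs_mul, abs_pow, abs_neg, abs_of_nonneg ht0,
      Nat.abs_cast]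
    ring
  have hsum : Summable (fun n : ℕ => ‖c n * ((n:ℝ) * (-t) ^ (n-1))‖) := by
    rw [show (fun n : ℕ => ‖c n * ((n:ℝ) * (-t) ^ (n-1))‖)
      = fun n : ℕ => (n:ℝ) * t ^ (n-1) / (16 ^ n * (n.factorial : ℝ)^2) from funext hterm]
    exact aux_cmp t ht
  have step1 : |fd (-t)| ≤ ∑' n : ℕ, (n:ℝ) * t ^ (n-1) / (16 ^ n * (n.factorial : ℝ)^2) := by
    rw [fd]
    calc |(∑' n : ℕ, c n * ((n:ℝ) * (-t) ^ (n-1)))|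
        ≤ ∑' n : ℕ, ‖c n * ((n:ℝ) * (-t) ^ (n-1))‖ := norm_tsum_le_tsum_norm hsum
      _ = _ := tsum_congr hterm
  have step2 : ∑' n : ℕ, (n:ℝ) * t ^ (n-1) / (16 ^ n * (n.factorial : ℝ)^2)
      = (1/16) * ∑' m : ℕ, (t/16)^m / ((m.factorial : ℝ) * (((m+1).factorial : ℕ) : ℝ)) := by
    rw [Summable.tsum_eq_zero_add (aux_cmp t ht)]
    simp only [Nat.cast_zero, zero_mul, zero_div, zero_add]
    rw [← tsum_mul_left]
    apply tsum_congr
    intro m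
    have e1 : ((m+1 : ℕ) : ℝ) * t ^ ((m+1) - 1) / (16 ^ (m+1) * (((m+1).factorial : ℕ) : ℝ)^2)
        = (1/16) * ((t/16)^m / ((m.factorial : ℝ) * (((m+1).factorial : ℕ) : ℝ))) := by
      have hfs : (((m+1).factorial : ℕ) : ℝ) = ((m:ℝ) + 1) * (m.factorial : ℝ) := by
        rw [Nat.factorial_succ]; push_cast; ring
      have hm1 : (0:ℝ) < (m:ℝ) + 1 := by positivity
      have hmf : (0:ℝ) < (m.factorial : ℝ) := by positivity
      simp only [Nat.add_sub_cancel, div_pow]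
      rw [hfs]
      field_simp
      push_cast
      ring
    rw [e1]
  rw [step2] at step1
  exact step1

set_option maxHeartbeats 1000000 in
lemma g_bound (M R u : ℝ) (hM : 0 ≤ M) (hR : R ≤ -(2*M+8)) (hu : |u| ≤ M) :
    |g R u| ≤ 2 / Real.sqrt (-R) := by
  have hR0 : R < 0 := by linarith
  have hRneg : (0:ℝ) < -R := by linarith
  have h8 : (8:ℝ) ≤ -R := by linarith
  have hRabs : |R| = -R := abs_of_neg hR0
  have huR : |u| < |R| := by rw [hRabs]; linarith
  have hM2 : M ≤ (-R)/2 := by linarith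
  have hu2 : u^2 ≤ R^2/4 := by
    have h1 : u^2 = |u|^2 := (sq_abs u).symm
    have h2 : |u|^2 ≤ M^2 := pow_le_pow_left₀ (abs_nonneg u) hu 2
    have h3 : M^2 ≤ ((-R)/2)^2 := pow_le_pow_left₀ hM hM2 2
    have : ((-R)/2)^2 = R^2/4 := by ring
    linarith
  set t := R^2 - u^2 with htdef
  have hyt : u^2 - R^2 = -t := by rw [htdef]; ring
  have hR64 : 64 ≤ R^2 := by nlinarith
  have ht49 : (4/9) * R^2 ≤ t := by rw [htdef]; nlinarith [sq_nonneg u]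
  have ht1 : 1 ≤ t := by nlinarith
  have htR2 : t ≤ R^2 := by rw [htdef]; nlinarith [sq_nonneg u]
  have ht16 : 16 ≤ t := by nlinarith
  set x := Real.sqrt (t/16) with hxdef
  have hx2 : x^2 = t/16 := Real.sq_sqrt (by linarith)
  have hx1 : 1 ≤ x := by
    rw [hxdef, show (1:ℝ) = Real.sqrt 1 by simp]
    exact Real.sqrt_le_sqrt (by linarith)
  have hx0 : 0 < x := by linarith
  have hx6 : (-R) ≤ 6 * x := by
    nlinarith [hx2, ht49, sq_abs R, abs_of_neg hR0, sq_nonneg (6*x - (-R)), sq_nonneg (6*x + R)]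
  have hx4 : 4 * x ≤ -R := by
    nlinarith [hx2, htR2, sq_nonneg (4*x - (-R)), sq_nonneg (4*x + R), Real.sqrt_nonneg (t/16)]
  set s := Real.sqrt x with hsdef
  have hs2 : s^2 = x := Real.sq_sqrt (le_of_lt hx0)
  have hs1 : 1 ≤ s := by
    rw [hsdef, show (1:ℝ) = Real.sqrt 1 by simp]
    exact Real.sqrt_le_sqrt hx1
  have hs0 : 0 < s := by linarith
  set E := Real.exp x with hEdef
  have hE0 : 0 < E := Real.exp_pos x
  -- bounds on f and deriv f
  have hfb : |f (u^2 - R^2)| ≤ E * E / s := by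
    rw [hyt]
    refine le_trans (f_neg_bound t (by linarith)) ?_
    have : ∑' n : ℕ, (t/16)^n / ((n.factorial : ℝ))^2
        = ∑' n : ℕ, (x^2)^n / ((n.factorial : ℝ))^2 := by
      simp only [hx2]
    rw [this]
    exact aux_S x hx1
  have hdb : |deriv f (u^2 - R^2)| ≤ (1/16) * (E * E / (x * s)) := by
    rw [hyt, deriv_f_eq]
    refine le_trans (fd_neg_bound t ht1) ?_
    have : ∑' m : ℕ, (t/16)^m / ((m.factorial : ℝ) * (((m+1).factorial : ℕ) : ℝ))
        = ∑' m : ℕ, (x^2)^m / ((m.factorial : ℝ) * (((m+1).factorial : ℕ) : ℝ)) := by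
      simp only [hx2]
    rw [this]
    exact mul_le_mul_of_nonneg_left (aux_T x hx1) (by norm_num)
  -- assemble
  rw [g, if_pos huR, Real.sign_of_neg hR0]
  have habs : |(-(1/2) : ℝ) * (-1) * Real.exp (R/2) *
      ((1/2) * f (u^2-R^2) + 2*R * deriv f (u^2-R^2))|
      = (1/2) * Real.exp (R/2) * |(1/2) * f (u^2-R^2) + 2*R * deriv f (u^2-R^2)| := by
    rw [abs_mul]
    congr 1
    rw [abs_mul, abs_mul]
    simp [abs_of_pos (Real.exp_pos (R/2))]
  rw [habs]
  have hsum : |(1/2) * f (u^2-R^2) + 2*R * deriv f (u^2-R^2)|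
      ≤ (1/2) * |f (u^2-R^2)| + 2*(-R) * |deriv f (u^2-R^2)| := by
    refine le_trans (abs_add_le _ _) ?_
    rw [abs_mul, abs_mul, abs_mul]
    rw [show |(1/2 : ℝ)| = 1/2 by norm_num, show |(2:ℝ)| = 2 by norm_num, hRabs]
  have hq : (1/2) * |f (u^2-R^2)| + 2*(-R) * |deriv f (u^2-R^2)|
      ≤ E * E * ((1/2)/s + (-R)/(8*x*s)) := by
    have h1 := mul_le_mul_of_nonneg_left hfb (by norm_num : (0:ℝ) ≤ 1/2)
    have h2 := mul_le_mul_of_nonneg_left hdb (by linarith : (0:ℝ) ≤ 2*(-R))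
    have e1 : (1/2) * (E * E / s) = E * E * ((1/2)/s) := by ring
    have e2 : 2*(-R) * ((1/16) * (E * E / (x * s))) = E * E * ((-R)/(8*x*s)) := by
      field_simp; ring
    calc (1/2) * |f (u^2-R^2)| + 2*(-R) * |deriv f (u^2-R^2)|
        ≤ (1/2) * (E * E / s) + 2*(-R) * ((1/16) * (E * E / (x * s))) := by linarith
      _ = E * E * ((1/2)/s + (-R)/(8*x*s)) := by rw [e1, e2]; ring
  have hqpos : (0:ℝ) ≤ (1/2)/s + (-R)/(8*x*s) := by positivity
  have hexp : Real.exp (R/2) * (E * E) ≤ 1 := by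
    rw [hEdef, ← Real.exp_add, ← Real.exp_add]
    rw [Real.exp_le_one_iff]
    linarith
  have step : (1/2) * Real.exp (R/2) * |(1/2) * f (u^2-R^2) + 2*R * deriv f (u^2-R^2)|
      ≤ (1/2) * ((1/2)/s + (-R)/(8*x*s)) := by
    have h3 : |(1/2) * f (u^2-R^2) + 2*R * deriv f (u^2-R^2)|
        ≤ E * E * ((1/2)/s + (-R)/(8*x*s)) := le_trans hsum hq
    have h4 := mul_le_mul_of_nonneg_left h3
      (by positivity : (0:ℝ) ≤ (1/2) * Real.exp (R/2))
    refine le_trans h4 ?_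
    have e3 : (1/2) * Real.exp (R/2) * (E * E * ((1/2)/s + (-R)/(8*x*s)))
        = (1/2) * (Real.exp (R/2) * (E*E)) * ((1/2)/s + (-R)/(8*x*s)) := by ring
    rw [e3]
    have := mul_le_mul_of_nonneg_right
      (mul_le_mul_of_nonneg_left hexp (by norm_num : (0:ℝ) ≤ 1/2)) hqpos
    simpa using this
  refine le_trans step ?_
  -- final numeric bound
  have hq2 : (1/2) * ((1/2)/s + (-R)/(8*x*s)) ≤ 5/(8*s) := by
    have h5 : (-R)/(8*x*s) ≤ (3/4)/s := by
      rw [div_le_div_iff₀ (by positivity) hs0]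
      nlinarith
    have h6 : (1/2)/s + (-R)/(8*x*s) ≤ (1/2)/s + (3/4)/s := by linarith
    have e4 : (1/2)/s + (3/4)/s = (5/4)/s := by field_simp; ring
    rw [e4] at h6
    have : (1/2) * ((5/4)/s) = 5/(8*s) := by field_simp; ring
    linarith
  refine le_trans hq2 ?_
  have hsR : Real.sqrt (-R) ≤ (16/5) * s := by
    have h7 : -R ≤ (16/5)^2 * x := by nlinarith
    calc Real.sqrt (-R) ≤ Real.sqrt ((16/5)^2 * x) := Real.sqrt_le_sqrt h7
      _ = (16/5) * s := by
          rw [Real.sqrt_mul (by positivity) x, Real.sqrt_sq (by norm_num : (0:ℝ) ≤ 16/5), hsdef]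
  have hsR0 : 0 < Real.sqrt (-R) := Real.sqrt_pos.mpr hRneg
  rw [div_le_div_iff₀ (by positivity) hsR0]
  nlinarith

lemma g_measurable (R : ℝ) : Measurable (g R) := by
  have m1 : Measurable (fun u : ℝ => u^2 - R^2) := by measurability
  have m2 : Measurable (fun u : ℝ => deriv f (u^2 - R^2)) := (measurable_deriv f).comp m1
  have m3 : Measurable (fun u : ℝ => f (u^2 - R^2)) := (f_cont.measurable).comp m1
  have m4 : Measurable (fun u : ℝ => -(1 / 2) * Real.sign R * Real.exp (R / 2) *
      ((1 / 2) * f (u ^ 2 - R ^ 2) + 2 * R * deriv f (u ^ 2 - R ^ 2))) := by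
    apply Measurable.const_mul
    exact (m3.const_mul _).add (m2.const_mul _)
  have hset : MeasurableSet {u : ℝ | |u| < |R|} := by
    have : {u : ℝ | |u| < |R|} = Set.Ioo (-|R|) |R| := by
      ext u; simp [abs_lt]
    rw [this]; exact measurableSet_Ioo
  exact Measurable.ite hset m4 measurable_const

theorem stmt9 (φ : ℝ → ℝ) (hφ : Continuous φ) (hsupp : HasCompactSupport φ) :
    Tendsto (fun R : ℝ =>
        (1 / 2) * Real.exp (R / 2) * (φ R + φ (-R))
          + ∫ u in Set.Ioo (-|R|) |R|, g R u * φ u)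
      atBot (nhds 0) := by
  obtain ⟨r, hr⟩ := (hsupp.isBounded).subset_closedBall (0 : ℝ)
  set M := max r 1 with hMdef
  have hM1 : (1:ℝ) ≤ M := le_max_right r 1
  have hM0 : (0:ℝ) ≤ M := by linarith
  have hsupp' : tsupport φ ⊆ Set.Icc (-M) M := by
    refine subset_trans hr ?_
    rw [Real.closedBall_eq_Icc]
    have hrM : r ≤ M := le_max_left r 1
    exact Set.Icc_subset_Icc (by linarith) (by linarith)
  have hzero : ∀ x : ℝ, M < |x| → φ x = 0 := by
    intro x hx
    apply image_eq_zero_of_notMem_tsupport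
    intro hmem
    have := hsupp' hmem
    rw [Set.mem_Icc] at this
    exact absurd (abs_le.mpr this) (not_le.mpr hx)
  obtain ⟨C, hC⟩ := hsupp.exists_bound_of_continuous hφ
  have hC0 : 0 ≤ C := le_trans (norm_nonneg (φ 0)) (hC 0)
  -- eventual bound
  have hev : ∀ᶠ R in atBot, ‖(1 / 2) * Real.exp (R / 2) * (φ R + φ (-R))
      + ∫ u in Set.Ioo (-|R|) |R|, g R u * φ u‖ ≤ 4 * C * M / Real.sqrt (-R) := by
    rw [eventually_atBot]
    refine ⟨-(2*M+8), fun R hR => ?_⟩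
    have hR0 : R < 0 := by linarith
    have hRneg : (0:ℝ) < -R := by linarith
    have hRabs : |R| = -R := abs_of_neg hR0
    have hMR : M < |R| := by rw [hRabs]; linarith
    have hφR : φ R = 0 := hzero R (by rw [abs_of_neg hR0]; linarith)
    have hφR' : φ (-R) = 0 := hzero (-R) (by rw [abs_of_pos hRneg]; linarith)
    rw [hφR, hφR']
    have hIccIoo : Set.Icc (-M) M ⊆ Set.Ioo (-|R|) |R| := by
      intro x hx
      rw [Set.mem_Icc] at hx
      rw [Set.mem_Ioo]
      constructor <;> [nlinarith [hRabs]; nlinarith [hRabs]]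
    have hrestrict : ∫ u in Set.Ioo (-|R|) |R|, g R u * φ u
        = ∫ u in Set.Icc (-M) M, g R u * φ u := by
      apply setIntegral_eq_of_subset_of_forall_diff_eq_zero measurableSet_Ioo hIccIoo
      intro x hx
      rcases hx with ⟨_, hx2⟩
      have : M < |x| := by
        by_contra h
        push_neg at h
        exact hx2 (Set.mem_Icc.mpr (abs_le.mp h))
      rw [hzero x this, mul_zero]
    rw [hrestrict]
    have hbound : ∀ x ∈ Set.Icc (-M) M, ‖g R x * φ x‖ ≤ (2 / Real.sqrt (-R)) * C := by
      intro x hx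
      rw [Set.mem_Icc] at hx
      have habs : |x| ≤ M := abs_le.mpr hx
      rw [norm_mul]
      have h1 : ‖g R x‖ ≤ 2 / Real.sqrt (-R) := by
        rw [Real.norm_eq_abs]; exact g_bound M R x hM0 hR habs
      exact mul_le_mul h1 (hC x) (norm_nonneg _) (by positivity)
    have hmeas : AEStronglyMeasurable (fun u => g R u * φ u)
        (volume.restrict (Set.Icc (-M) M)) :=
      (((g_measurable R).mul hφ.measurable).aestronglyMeasurable).restrict
    have hfin : volume (Set.Icc (-M : ℝ) M) < ⊤ := measure_Icc_lt_top
    have := norm_setIntegral_le_of_norm_le_const hfin hbound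
    have hvol : (volume (Set.Icc (-M : ℝ) M)).toReal = 2 * M := by
      rw [Real.volume_Icc, ENNReal.toReal_ofReal (by linarith)]
      ring
    rw [Measure.real, hvol] at this
    calc ‖(1:ℝ)/2 * Real.exp (R/2) * (0 + 0) + ∫ u in Set.Icc (-M) M, g R u * φ u‖
        = ‖∫ u in Set.Icc (-M) M, g R u * φ u‖ := by norm_num
      _ ≤ (2 / Real.sqrt (-R)) * C * (2 * M) := this
      _ = 4 * C * M / Real.sqrt (-R) := by ring
  -- the bound tends to zero
  have hlim : Tendsto (fun R : ℝ => 4 * C * M / Real.sqrt (-R)) atBot (nhds 0) := by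
    have hsq : Tendsto Real.sqrt atTop atTop := by
      apply tendsto_atTop_atTop_of_monotone (fun a b hab => Real.sqrt_le_sqrt hab)
      exact fun b => ⟨b^2, by rw [Real.sqrt_sq_eq_abs]; exact le_abs_self b⟩
    have h1 : Tendsto (fun R : ℝ => Real.sqrt (-R)) atBot atTop :=
      hsq.comp tendsto_neg_atBot_atTop
    have h2 := h1.inv_tendsto_atTop
    have h3 := h2.const_mul (4*C*M)
    simpa [div_eq_mul_inv] using h3
  exact squeeze_zero_norm' hev hlim
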